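/- For every natural number k, there is no strictly increasing chain of length k+2 in the k-fold product of the flat domain of natural numbers: there is no strictly monotone function from Fin (k+2) to (Fin k → WithBot ℕ), where the latter carries the pointwise order. Equivalently, every strictly ascending chain in (Fin k → WithBot ℕ) has at most k+1 elements. -/

import Mathlib

/-- The flat domain of natural numbers: the carrier is `WithBot ℕ`, ordered so
that `⊥` is below every numeral and distinct numerals are incomparable. -/
def FlatNat : Type := WithBot ℕ

namespace FlatNat

instance : PartialOrder FlatNat where
  le a b := a = (⊥ : WithBot ℕ) ∨ a = b
  le_refl a := Or.inr rfl
  le_trans a b c hab hbc := by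
    rcases hab with h | h
    · exact Or.inl h
    · rw [h]; exact hbc
  le_antisymm a b hab hba := by
    rcases hab with h | h
    · rcases hba with h' | h'
      · rw [h, h']
      · exact h'.symm
    · exact h

instance : OrderBot FlatNat where
  bot := (⊥ : WithBot ℕ)
  bot_le a := Or.inl rfl

theorem le_iff {a b : FlatNat} : a ≤ b ↔ a = (⊥ : WithBot ℕ) ∨ a = b := Iff.rfl

end FlatNat

/-- There is no strictly increasing chain of length `k + 2` in the `k`-fold
product of the flat domain of natural numbers. -/
theorem no_long_chain (k : ℕ) :
    ¬ ∃ f : Fin (k + 2) → (Fin k → FlatNat), StrictMono f := by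
  rintro ⟨f, hf⟩
  classical
  set S : Fin (k + 2) → Finset (Fin k) :=
    fun i => Finset.univ.filter (fun j => f i j ≠ (⊥ : WithBot ℕ)) with hS
  have hmono : ∀ {i i' : Fin (k + 2)}, i < i' → S i ⊂ S i' := by
    intro i i' hii
    have hlt := hf hii
    have hle : f i ≤ f i' := le_of_lt hlt
    have hsub : S i ⊆ S i' := by
      intro j hj
      simp only [hS, Finset.mem_filter, Finset.mem_univ, true_and] at hj ⊢
      rcases FlatNat.le_iff.mp (hle j) with h | h
      · exact absurd h hj
      · rwa [← h]
    refine ⟨hsub, ?_⟩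
    intro hsub'
    have hne : f i ≠ f i' := ne_of_lt hlt
    apply hne
    funext j
    rcases FlatNat.le_iff.mp (hle j) with h | h
    · -- f i j = ⊥, so j ∉ S i, so j ∉ S i', so f i' j = ⊥
      by_cases h' : f i' j = (⊥ : WithBot ℕ)
      · rw [h, h']
      · have : j ∈ S i := hsub' (by simp only [hS, Finset.mem_filter, Finset.mem_univ, true_and]; exact h')
        simp only [hS, Finset.mem_filter, Finset.mem_univ, true_and] at this
        exact absurd h this
    · exact h
  have hcard : StrictMono (fun i => (S i).card) := fun i i' h =>
    Finset.card_lt_card (hmono h)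
  have hbound : ∀ i, (S i).card ≤ k := fun i =>
    le_trans (Finset.card_le_univ _) (by simp)
  let G : Fin (k + 2) → Fin (k + 1) := fun i => ⟨(S i).card, Nat.lt_succ_of_le (hbound i)⟩
  have hGinj : Function.Injective G := fun a b hab => by
    have : (S a).card = (S b).card := congrArg Fin.val hab
    exact hcard.injective this
  have := Fintype.card_le_of_injective G hGinj
  simp at this
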